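/- arXiv:1706.06949 — 2 statements merged into one kernel-verified Lean document; each statement's English description precedes it below -/
import Mathlib

section
/- Let κ > 0. For every R > 0 there exists a constant C > 0 such that for all r, r' ∈ ℝ² with ‖r'‖ ≤ R and ‖r‖ ≥ 2R one has | exp(iκ‖r − r'‖) − exp(iκ‖r‖)·exp(−iκ⟨r̂, r'⟩) | ≤ C/‖r‖, where r̂ = r/‖r‖. That is, the phase factor of an outgoing wave centered at r' satisfies exp(iκ‖r − r'‖) = exp(iκ(‖r‖ − r̂·r'))(1 + O(‖r‖⁻¹)) uniformly for r' in a bounded set. -/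
open Complex

lemma norm_exp_mul_I_sub_one_le (x : ℝ) :
    ‖Complex.exp ((x : ℂ) * Complex.I) - 1‖ ≤ |x| := by
  have h : Complex.exp ((x : ℂ) * Complex.I) - 1
      = ((Real.cos x - 1 : ℝ) : ℂ) + ((Real.sin x : ℝ) : ℂ) * Complex.I := by
    rw [Complex.exp_mul_I]
    push_cast
    ring
  have hs : ‖Complex.exp ((x : ℂ) * Complex.I) - 1‖ ^ 2 = (Real.cos x - 1) ^ 2 + Real.sin x ^ 2 := by
    rw [h, Complex.sq_norm, Complex.normSq_apply]
    simp
    rw [Complex.cos_ofReal_re, Complex.sin_ofReal_re]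
    ring
  have hcos : (Real.cos x - 1) ^ 2 + Real.sin x ^ 2 = 2 - 2 * Real.cos x := by
    nlinarith [Real.sin_sq_add_cos_sq x]
  have hc := Real.cos_sq (x / 2)
  have hx2 : 2 * (x / 2) = x := by ring
  rw [hx2] at hc
  have hpyth := Real.sin_sq_add_cos_sq (x / 2)
  have hsin : Real.sin (x / 2) ^ 2 ≤ (x / 2) ^ 2 := Real.sin_sq_le_sq
  have h2 : ‖Complex.exp ((x : ℂ) * Complex.I) - 1‖ ^ 2 ≤ x ^ 2 := by
    rw [hs, hcos]; nlinarith
  nlinarith [norm_nonneg (Complex.exp ((x : ℂ) * Complex.I) - 1), abs_nonneg x, _root_.sq_abs x]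

/-- Let `κ > 0`. For every `R > 0` there is `C > 0` such that for all
`r, r' ∈ ℝ²` with `‖r'‖ ≤ R` and `‖r‖ ≥ 2R`,
`|exp(iκ‖r − r'‖) − exp(iκ‖r‖)·exp(−iκ⟨r̂, r'⟩)| ≤ C/‖r‖`, where `r̂ = r/‖r‖`. -/
theorem phase_factor_asymptotic_expansion (κ : ℝ) (hκ : 0 < κ) :
    ∀ R : ℝ, 0 < R → ∃ C : ℝ, 0 < C ∧
      ∀ r r' : EuclideanSpace ℝ (Fin 2), ‖r'‖ ≤ R → 2 * R ≤ ‖r‖ →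
        ‖Complex.exp (Complex.I * κ * (‖r - r'‖ : ℝ))
          - Complex.exp (Complex.I * κ * (‖r‖ : ℝ))
            * Complex.exp (-(Complex.I * κ * ((inner ℝ ((‖r‖)⁻¹ • r) r' : ℝ) : ℂ)))‖
          ≤ C / ‖r‖ := by
  intro R hR
  refine ⟨κ * R ^ 2, by positivity, ?_⟩
  intro r r' h1 h2
  have hr : 0 < ‖r‖ := by linarith
  set t : ℝ := (inner ℝ ((‖r‖)⁻¹ • r) r' : ℝ) with ht
  have htval : t = (‖r‖)⁻¹ * (inner ℝ r r' : ℝ) := by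
    rw [ht, real_inner_smul_left]
  have hip : ‖r‖ * t = (inner ℝ r r' : ℝ) := by
    rw [htval]; field_simp
  have htabs : |t| ≤ ‖r'‖ := by
    rw [htval, abs_mul, abs_inv, abs_norm]
    have := abs_real_inner_le_norm r r'
    rw [inv_mul_le_iff₀ hr]
    exact this
  set a : ℝ := ‖r - r'‖ with ha
  set b : ℝ := ‖r‖ - t with hb
  have hasq : a ^ 2 = ‖r‖ ^ 2 - 2 * (inner ℝ r r' : ℝ) + ‖r'‖ ^ 2 := by
    rw [ha, @norm_sub_sq_real]
  have hsq : a ^ 2 - b ^ 2 = ‖r'‖ ^ 2 - t ^ 2 := by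
    rw [hasq, hb]
    have : (‖r‖ - t) ^ 2 = ‖r‖ ^ 2 - 2 * (‖r‖ * t) + t ^ 2 := by ring
    rw [this, hip]; ring
  have hsqnn : 0 ≤ a ^ 2 - b ^ 2 := by
    rw [hsq]; nlinarith [abs_nonneg t, _root_.sq_abs t, norm_nonneg r']
  have hsqle : a ^ 2 - b ^ 2 ≤ R ^ 2 := by
    rw [hsq]; nlinarith [abs_nonneg t, _root_.sq_abs t, norm_nonneg r']
  have hage : ‖r‖ - R ≤ a := by
    have := norm_sub_norm_le r r'
    linarith
  have hbge : ‖r‖ - R ≤ b := by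
    rw [hb]; have := abs_le.mp htabs; linarith [this.2]
  have habpos : ‖r‖ ≤ a + b := by linarith
  have hanonneg : 0 ≤ a := norm_nonneg _
  -- |a - b| ≤ R^2 / ‖r‖
  have hab : |a - b| ≤ R ^ 2 / ‖r‖ := by
    rw [abs_le]
    constructor
    · rcases le_or_gt b a with h | h
      · have : 0 ≤ R ^ 2 / ‖r‖ := by positivity
        linarith
      · exfalso; nlinarith
    · rcases le_or_gt (a - b) 0 with h | h
      · have : 0 ≤ R ^ 2 / ‖r‖ := by positivity
        linarith
      · rw [le_div_iff₀ hr]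
        nlinarith
  -- rewrite the complex expression
  have hbexp : Complex.exp (Complex.I * κ * (‖r‖ : ℝ)) * Complex.exp (-(Complex.I * κ * (t : ℂ)))
      = Complex.exp (Complex.I * κ * (b : ℂ)) := by
    rw [← Complex.exp_add, hb]
    congr 1
    push_cast
    ring
  rw [hbexp]
  have hfactor : Complex.exp (Complex.I * κ * (a : ℂ)) - Complex.exp (Complex.I * κ * (b : ℂ))
      = Complex.exp (Complex.I * κ * (b : ℂ)) * (Complex.exp (((κ * (a - b) : ℝ) : ℂ) * Complex.I) - 1) := by
    rw [mul_sub, mul_one, ← Complex.exp_add]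
    congr 1
    push_cast
    ring
  rw [hfactor, norm_mul]
  have hnorm1 : ‖Complex.exp (Complex.I * κ * (b : ℂ))‖ = 1 := by
    rw [Complex.norm_exp]
    simp [mul_comm]
  rw [hnorm1, one_mul]
  calc ‖Complex.exp (((κ * (a - b) : ℝ) : ℂ) * Complex.I) - 1‖
      ≤ |κ * (a - b)| := norm_exp_mul_I_sub_one_le _
    _ = κ * |a - b| := by rw [abs_mul, abs_of_pos hκ]
    _ ≤ κ * (R ^ 2 / ‖r‖) := by exact mul_le_mul_of_nonneg_left hab hκ.le
    _ = κ * R ^ 2 / ‖r‖ := by ring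
end

section
/- Let κ > 0, let K ⊂ ℝ² be a bounded set, let μ be a finite (nonnegative) measure on ℝ² supported in K, and let h : ℝ² → ℂ be a bounded measurable function. Define ψ(r) = ∫ h(r')·exp(iκ‖r − r'‖)/‖r − r'‖^{1/2} dμ(r') for r outside a ball containing K, and define ψ_∞(r̂) = ∫ h(r')·exp(−iκ⟨r̂, r'⟩) dμ(r') for unit vectors r̂. Then there exist constants C > 0 and R₀ > 0 such that for all r ∈ ℝ² with ‖r‖ ≥ R₀, | ‖r‖^{1/2}·exp(−iκ‖r‖)·ψ(r) − ψ_∞(r/‖r‖) | ≤ C/‖r‖; i.e., ψ(r) = (exp(iκ‖r‖)/‖r‖^{1/2})(ψ_∞(r̂) + O(‖r‖⁻¹)) as ‖r‖ → ∞, uniformly in all directions r̂ = r/‖r‖. -/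
open MeasureTheory

lemma norm_cexp_sub_cexp_le (a b : ℝ) :
    ‖Complex.exp (a * Complex.I) - Complex.exp (b * Complex.I)‖ ≤ |a - b| := by
  have hder : ∀ t : ℝ, HasDerivAt (fun s : ℝ => Complex.exp (s * Complex.I))
      (Complex.exp (t * Complex.I) * Complex.I) t := by
    intro t
    have h1 : HasDerivAt (fun s : ℝ => (s : ℂ) * Complex.I) Complex.I t := by
      simpa using (Complex.ofRealCLM.hasDerivAt (x := t)).mul_const Complex.I
    simpa using h1.cexp
  have := (convex_univ (𝕜 := ℝ) (E := ℝ)).norm_image_sub_le_of_norm_hasDerivWithin_le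
    (f := fun s : ℝ => Complex.exp (s * Complex.I))
    (f' := fun t : ℝ => Complex.exp (t * Complex.I) * Complex.I) (C := 1)
    (fun t _ => (hder t).hasDerivWithinAt)
    (fun t _ => by simp [Complex.norm_exp_ofReal_mul_I])
    (Set.mem_univ b) (Set.mem_univ a)
  simpa using this

lemma rpow_half_sq {x : ℝ} (hx : 0 ≤ x) : (x ^ ((1:ℝ)/2)) ^ 2 = x := by
  rw [← Real.rpow_natCast (x ^ ((1:ℝ)/2)) 2, ← Real.rpow_mul hx]
  norm_num

set_option maxHeartbeats 1000000 in
/-- For a continuous superposition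
`ψ(r) = ∫ h(r') exp(iκ‖r − r'‖)/‖r − r'‖^{1/2} dμ(r')` of outgoing point-source waves,
where `μ` is a finite measure supported in a bounded set `K` and `h` is bounded and
measurable, the far-field pattern `ψ_∞(r̂) = ∫ h(r') exp(−iκ⟨r̂, r'⟩) dμ(r')` satisfies:
there exist `C > 0` and `R₀ > 0` such that for all `‖r‖ ≥ R₀`,
`|‖r‖^{1/2} e^{−iκ‖r‖} ψ(r) − ψ_∞(r/‖r‖)| ≤ C/‖r‖`. -/
theorem far_field_pattern_of_continuous_superposition
    (κ : ℝ) (hκ : 0 < κ)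
    (K : Set (EuclideanSpace ℝ (Fin 2))) (hK : Bornology.IsBounded K)
    (μ : Measure (EuclideanSpace ℝ (Fin 2))) [IsFiniteMeasure μ]
    (hμK : μ Kᶜ = 0)
    (h : EuclideanSpace ℝ (Fin 2) → ℂ) (hmeas : Measurable h)
    (B : ℝ) (hbd : ∀ x, ‖h x‖ ≤ B)
    (ψ : EuclideanSpace ℝ (Fin 2) → ℂ)
    (hψ : ∀ r : EuclideanSpace ℝ (Fin 2),
      ψ r = ∫ r', h r' * Complex.exp (Complex.I * κ * (‖r - r'‖ : ℝ))
          / ((‖r - r'‖ ^ ((1:ℝ)/2) : ℝ) : ℂ) ∂μ)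
    (ψinf : EuclideanSpace ℝ (Fin 2) → ℂ)
    (hψinf : ∀ x : EuclideanSpace ℝ (Fin 2),
      ψinf x = ∫ r', h r' * Complex.exp (-(Complex.I * κ * ((inner ℝ x r' : ℝ) : ℂ))) ∂μ) :
    ∃ C : ℝ, 0 < C ∧ ∃ R₀ : ℝ, 0 < R₀ ∧
      ∀ r : EuclideanSpace ℝ (Fin 2), R₀ ≤ ‖r‖ →
        ‖((‖r‖ ^ ((1:ℝ)/2) : ℝ) : ℂ) * Complex.exp (-(Complex.I * κ * (‖r‖ : ℝ))) * ψ r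
          - ψinf ((‖r‖)⁻¹ • r)‖ ≤ C / ‖r‖ := by
  have hB0 : 0 ≤ B := le_trans (norm_nonneg _) (hbd 0)
  obtain ⟨M0, hM0⟩ := hK.exists_norm_le
  set M : ℝ := max M0 1 with hMdef
  have hM1 : (1:ℝ) ≤ M := le_max_right _ _
  have hMpos : (0:ℝ) < M := lt_of_lt_of_le one_pos hM1
  have hMK : ∀ x ∈ K, ‖x‖ ≤ M := fun x hx => le_trans (hM0 x hx) (le_max_left _ _)
  set m : ℝ := (μ Set.univ).toReal with hmdef
  have hm0 : 0 ≤ m := ENNReal.toReal_nonneg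
  set Cb : ℝ := B * (2 * M + κ * M ^ 2) with hCbdef
  have hCb0 : 0 ≤ Cb := by positivity
  refine ⟨Cb * m + 1, by positivity, 2 * M, by positivity, ?_⟩
  intro r hr
  set N : ℝ := ‖r‖ with hNdef
  have hN0 : (0:ℝ) < N := lt_of_lt_of_le (by positivity) hr
  have haeK : ∀ᵐ r' ∂μ, r' ∈ K := by
    rw [MeasureTheory.ae_iff]
    simpa [Set.compl_def] using hμK
  -- the integrands
  set f1 : EuclideanSpace ℝ (Fin 2) → ℂ := fun r' =>
    h r' * Complex.exp (Complex.I * κ * (‖r - r'‖ : ℝ))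
      / ((‖r - r'‖ ^ ((1:ℝ)/2) : ℝ) : ℂ) with hf1def
  set f2 : EuclideanSpace ℝ (Fin 2) → ℂ := fun r' =>
    h r' * Complex.exp (-(Complex.I * κ *
      ((inner ℝ ((‖r‖)⁻¹ • r) r' : ℝ) : ℂ))) with hf2def
  set z : ℂ := ((N ^ ((1:ℝ)/2) : ℝ) : ℂ) * Complex.exp (-(Complex.I * κ * (N : ℝ))) with hzdef
  -- geometric facts
  have hDfacts : ∀ r' ∈ K, N / 2 ≤ ‖r - r'‖ ∧ |N - ‖r - r'‖| ≤ M := by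
    intro r' hr'
    have h1 : ‖r'‖ ≤ M := hMK r' hr'
    have h2 : |‖r‖ - ‖r - r'‖| ≤ ‖r - (r - r')‖ := abs_norm_sub_norm_le r (r - r')
    have h3 : r - (r - r') = r' := by abel
    rw [h3] at h2
    have h4 := abs_le.mp (le_trans h2 h1)
    exact ⟨by linarith, le_trans h2 h1⟩
  -- complex exp norms
  have hexp1 : ∀ x : ℝ, ‖Complex.exp (Complex.I * κ * (x:ℂ))‖ = 1 := by
    intro x
    have : Complex.I * κ * (x:ℂ) = ((κ * x : ℝ) : ℂ) * Complex.I := by push_cast; ring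
    rw [this, Complex.norm_exp_ofReal_mul_I]
  have hexp2 : ∀ x : ℝ, ‖Complex.exp (-(Complex.I * κ * (x:ℂ)))‖ = 1 := by
    intro x
    have : -(Complex.I * κ * (x:ℂ)) = ((-(κ * x) : ℝ) : ℂ) * Complex.I := by push_cast; ring
    rw [this, Complex.norm_exp_ofReal_mul_I]
  -- integrability
  have hmeas1 : AEStronglyMeasurable f1 μ := by
    apply Measurable.aestronglyMeasurable
    apply Measurable.div
    · exact hmeas.mul (Complex.measurable_exp.comp
        (measurable_const.mul (Complex.measurable_ofReal.comp
          ((measurable_const.sub measurable_id).norm))))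
    · exact Complex.measurable_ofReal.comp
        (((Real.continuous_rpow_const (by norm_num)).comp
          ((continuous_const.sub continuous_id).norm)).measurable)
  have hmeas2 : AEStronglyMeasurable f2 μ := by
    apply Measurable.aestronglyMeasurable
    apply hmeas.mul
    apply Complex.measurable_exp.comp
    apply Measurable.neg
    apply measurable_const.mul
    exact Complex.measurable_ofReal.comp
      ((continuous_const.inner continuous_id).measurable)
  have hint1 : Integrable f1 μ := by
    refine ⟨hmeas1, HasFiniteIntegral.of_bounded (C := B) ?_⟩
    filter_upwards [haeK] with r' hr'
    obtain ⟨hD2, hDM⟩ := hDfacts r' hr'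
    have hD1 : (1:ℝ) ≤ ‖r - r'‖ := by linarith
    have hD1' : (1:ℝ) ≤ ‖r - r'‖ ^ ((1:ℝ)/2) :=
      Real.one_le_rpow hD1 (by norm_num)
    have : ‖f1 r'‖ = ‖h r'‖ * 1 / ‖(((‖r - r'‖ ^ ((1:ℝ)/2) : ℝ)) : ℂ)‖ := by
      rw [hf1def]; simp only [norm_div, norm_mul, hexp1]
    rw [this, Complex.norm_real, Real.norm_eq_abs, abs_of_nonneg (by linarith)]
    calc ‖h r'‖ * 1 / (‖r - r'‖ ^ ((1:ℝ)/2)) ≤ ‖h r'‖ * 1 / 1 := by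
          apply div_le_div_of_nonneg_left _ one_pos hD1' <;> positivity
      _ = ‖h r'‖ := by ring
      _ ≤ B := hbd r'
  have hint2 : Integrable f2 μ := by
    refine ⟨hmeas2, HasFiniteIntegral.of_bounded (C := B) ?_⟩
    filter_upwards with r'
    have : ‖f2 r'‖ = ‖h r'‖ := by rw [hf2def]; simp only [norm_mul, hexp2, mul_one]
    rw [this]; exact hbd r'
  -- pointwise estimate
  have hpt : ∀ r' ∈ K, ‖z * f1 r' - f2 r'‖ ≤ Cb / N := by
    intro r' hr'
    obtain ⟨hD2, hDM⟩ := hDfacts r' hr'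
    set D : ℝ := ‖r - r'‖ with hDdef
    have hD0 : (0:ℝ) < D := by linarith
    have hr'M : ‖r'‖ ≤ M := hMK r' hr'
    set p : ℝ := (inner ℝ ((‖r‖)⁻¹ • r) r' : ℝ) with hpdef
    -- |p| ≤ ‖r'‖
    have hpn : |p| ≤ ‖r'‖ := by
      have := abs_real_inner_le_norm ((‖r‖)⁻¹ • r) r'
      have hu : ‖(‖r‖)⁻¹ • r‖ = 1 := by
        rw [norm_smul, norm_inv, norm_norm, ← hNdef, inv_mul_cancel₀ (ne_of_gt hN0)]
      rw [hu, one_mul] at this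
      exact this
    have hpM : |p| ≤ M := le_trans hpn hr'M
    -- law of cosines
    have hinner : (inner ℝ r r' : ℝ) = N * p := by
      rw [hpdef, real_inner_smul_left, ← hNdef]
      field_simp
    have hDsq : D ^ 2 = N ^ 2 - 2 * (N * p) + ‖r'‖ ^ 2 := by
      rw [hDdef, @norm_sub_sq_real, hinner, ← hNdef]
    set t : ℝ := N - p with htdef
    have ht2 : N / 2 ≤ t := by
      have : p ≤ M := le_trans (le_abs_self p) hpM
      rw [htdef]; linarith
    have hDt2 : D ^ 2 - t ^ 2 = ‖r'‖ ^ 2 - p ^ 2 := by rw [hDsq, htdef]; ring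
    have hDt2nn : 0 ≤ D ^ 2 - t ^ 2 := by
      rw [hDt2]
      have := sq_abs p ▸ pow_le_pow_left₀ (abs_nonneg p) hpn 2
      nlinarith [sq_abs p, pow_le_pow_left₀ (abs_nonneg p) hpn 2]
    have hDt2M : D ^ 2 - t ^ 2 ≤ M ^ 2 := by
      rw [hDt2]
      nlinarith [norm_nonneg r', sq_nonneg p]
    have hDtnn : 0 ≤ D - t := by nlinarith [sq_nonneg (D - t), sq_nonneg (D + t)]
    have hphase : |D - t| ≤ M ^ 2 / N := by
      rw [abs_of_nonneg hDtnn, le_div_iff₀ hN0]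
      nlinarith
    -- amplitude
    set q : ℝ := N ^ ((1:ℝ)/2) / D ^ ((1:ℝ)/2) with hqdef
    have hq0 : 0 ≤ q := by
      rw [hqdef]; positivity
    have hqsq : q ^ 2 = N / D := by
      rw [hqdef, div_pow, rpow_half_sq hN0.le, rpow_half_sq hD0.le]
    have hamp : |q - 1| ≤ 2 * M / N := by
      have e1 : |q - 1| ≤ |q - 1| * (q + 1) :=
        le_mul_of_one_le_right (abs_nonneg _) (by linarith)
      have e2 : |q - 1| * (q + 1) = |q ^ 2 - 1| := by
        rw [← abs_of_nonneg (show (0:ℝ) ≤ q + 1 by linarith), ← abs_mul]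
        ring_nf
      have e3 : |q ^ 2 - 1| = |N - D| / D := by
        rw [hqsq, show N / D - 1 = (N - D) / D by field_simp, abs_div, abs_of_pos hD0]
      have e4 : |N - D| / D ≤ 2 * M / N := by
        rw [div_le_div_iff₀ hD0 hN0]
        have h5 : |N - D| ≤ M := hDM
        nlinarith [abs_nonneg (N - D)]
      calc |q - 1| ≤ |q ^ 2 - 1| := e2 ▸ e1
        _ = |N - D| / D := e3
        _ ≤ 2 * M / N := e4
    -- exponential rewrites
    set a : ℝ := κ * D - κ * N with hadef
    set b : ℝ := -(κ * p) with hbdef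
    have he1 : Complex.exp (-(Complex.I * κ * (N:ℂ))) * Complex.exp (Complex.I * κ * (D:ℂ))
        = Complex.exp ((a : ℂ) * Complex.I) := by
      rw [← Complex.exp_add]; congr 1; rw [hadef]; push_cast; ring
    have he2 : Complex.exp (-(Complex.I * κ * (p:ℂ))) = Complex.exp ((b : ℂ) * Complex.I) := by
      congr 1; rw [hbdef]; push_cast; ring
    have hqC : ((q : ℝ) : ℂ) = ((N ^ ((1:ℝ)/2) : ℝ) : ℂ) / ((D ^ ((1:ℝ)/2) : ℝ) : ℂ) := by
      rw [hqdef]; push_cast; ring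
    have key1 : z * f1 r' = h r' * ((q : ℂ) * Complex.exp ((a:ℂ) * Complex.I)) := by
      rw [hzdef, hf1def, ← he1, hqC]
      simp only [← hDdef]
      ring
    have key2 : f2 r' = h r' * Complex.exp ((b:ℂ) * Complex.I) := by
      have e0 : f2 r' = h r' * Complex.exp (-(Complex.I * κ * (p:ℂ))) := rfl
      rw [e0, he2]
    rw [key1, key2, ← mul_sub, norm_mul]
    have hE : ‖(q : ℂ) * Complex.exp ((a:ℂ) * Complex.I) - Complex.exp ((b:ℂ) * Complex.I)‖
        ≤ 2 * M / N + κ * M ^ 2 / N := by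
      have hsplit : (q : ℂ) * Complex.exp ((a:ℂ) * Complex.I) - Complex.exp ((b:ℂ) * Complex.I)
          = ((q : ℂ) - 1) * Complex.exp ((a:ℂ) * Complex.I)
            + (Complex.exp ((a:ℂ) * Complex.I) - Complex.exp ((b:ℂ) * Complex.I)) := by ring
      rw [hsplit]
      refine le_trans (norm_add_le _ _) (add_le_add ?_ ?_)
      · rw [norm_mul, Complex.norm_exp_ofReal_mul_I, mul_one]
        have : ((q : ℂ) - 1) = (((q - 1 : ℝ)) : ℂ) := by push_cast; ring
        rw [this, Complex.norm_real, Real.norm_eq_abs]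
        exact hamp
      · refine le_trans (norm_cexp_sub_cexp_le a b) ?_
        have : a - b = κ * (D - t) := by rw [hadef, hbdef, htdef]; ring
        rw [this, abs_mul, abs_of_pos hκ]
        calc κ * |D - t| ≤ κ * (M ^ 2 / N) := by
              exact mul_le_mul_of_nonneg_left hphase hκ.le
          _ = κ * M ^ 2 / N := by ring
    calc ‖h r'‖ * ‖(q : ℂ) * Complex.exp ((a:ℂ) * Complex.I)
          - Complex.exp ((b:ℂ) * Complex.I)‖
        ≤ B * (2 * M / N + κ * M ^ 2 / N) :=
          mul_le_mul (hbd r') hE (norm_nonneg _) hB0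
      _ = Cb / N := by rw [hCbdef]; field_simp
  -- put it together
  rw [hψ r, hψinf]
  rw [show (∫ r', h r' * Complex.exp (Complex.I * κ * (‖r - r'‖ : ℝ))
        / ((‖r - r'‖ ^ ((1:ℝ)/2) : ℝ) : ℂ) ∂μ) = ∫ r', f1 r' ∂μ from rfl,
      show (∫ r', h r' * Complex.exp (-(Complex.I * κ *
        ((inner ℝ ((‖r‖)⁻¹ • r) r' : ℝ) : ℂ))) ∂μ) = ∫ r', f2 r' ∂μ from rfl]
  rw [← integral_const_mul z f1, ← integral_sub (hint1.const_mul z) hint2]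
  refine le_trans (norm_integral_le_of_norm_le_const (C := Cb / N) ?_) ?_
  · filter_upwards [haeK] with r' hr' using hpt r' hr'
  · change Cb / N * m ≤ _
    rw [div_mul_eq_mul_div, div_le_div_iff₀ hN0 hN0]
    nlinarith
end
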